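/- Let k ≥ 3 and let D be a unitrivalent diagram on k colors having a connected component C of degree k−1, i.e. a tree component with exactly one univalent vertex of each of the k colors. Then the class of D in B^{hl}(k) is zero. -/

import Mathlib

/-!
Unitrivalent diagrams on `k` colors, in half-edge (combinatorial map) form.

A diagram is given by a finite set `H` of half-edges, a fixed-point-free
involution `sig` pairing the two half-edges of each edge, and a permutation
`tau` with `tau ^ 3 = id` whose orbits are the vertices: fixed points are
univalent vertices (carrying a color in `Fin k`) and 3-element orbits are
trivalent vertices, the cyclic ordering of whose incident edges is given by
`tau`.  Every connected component is required to contain a univalent vertex.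
-/
structure Diagram (k : ℕ) where
  H : Type
  fin : Fintype H
  dec : DecidableEq H
  sig : H → H
  sig_invol : ∀ h, sig (sig h) = h
  sig_ne : ∀ h, sig h ≠ h
  tau : H → H
  tau_cube : ∀ h, tau (tau (tau h)) = h
  color : H → Fin k
  conn : ∀ h, ∃ h', Relation.ReflTransGen (fun a b => b = sig a ∨ b = tau a) h h' ∧ tau h' = h'

attribute [instance] Diagram.fin Diagram.dec

namespace Diagram

variable {k : ℕ}

/-- `a` and `b` are half-edges of the same connected component. -/
def Reach (D : Diagram k) (a b : D.H) : Prop :=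
  Relation.ReflTransGen (fun x y => y = D.sig x ∨ y = D.tau x) a b

/-- The set of half-edges of the connected component of `h0`. -/
def compSet (D : Diagram k) (h0 : D.H) : Set D.H := {x | D.Reach h0 x}

/-- The set of univalent vertices (= `tau`-fixed half-edges) of the component of `h0`. -/
def univIn (D : Diagram k) (h0 : D.H) : Set D.H := {x | D.Reach h0 x ∧ D.tau x = x}

/-- The component of `h0` is a tree.  (Euler-count criterion: a connected component of a
graph all of whose vertices have degree 1 or 3 and with `u` univalent vertices is a tree
iff it has exactly `4 * u - 6` half-edges.) -/
def IsTreeAt (D : Diagram k) (h0 : D.H) : Prop :=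
  (D.compSet h0).ncard + 6 = 4 * (D.univIn h0).ncard

/-- The component of `h0` is boring: it has two univalent vertices of the same color,
or it contains a cycle (i.e. is not a tree). -/
def IsBoringAt (D : Diagram k) (h0 : D.H) : Prop :=
  (∃ x ∈ D.univIn h0, ∃ y ∈ D.univIn h0, x ≠ y ∧ D.color x = D.color y) ∨ ¬ D.IsTreeAt h0

def HasBoring (D : Diagram k) : Prop := ∃ h0, D.IsBoringAt h0

/-- `m D i j` (for `i ≠ j`) is the number of connected components of `D` consisting of a
single edge with one endpoint colored `i` and the other colored `j`; each such component
is counted via its `i`-colored end. -/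
noncomputable def m (D : Diagram k) (i j : Fin k) : ℕ :=
  {x : D.H | D.tau x = x ∧ D.tau (D.sig x) = D.sig x ∧ D.color x = i ∧
    D.color (D.sig x) = j}.ncard

/-- Number of vertices of the component of `h0`. -/
noncomputable def vertAt (D : Diagram k) (h0 : D.H) : ℕ :=
  (D.univIn h0).ncard + ((D.compSet h0).ncard - (D.univIn h0).ncard) / 3

/-- Degree (half the number of vertices) of the component of `h0`. -/
noncomputable def degAt (D : Diagram k) (h0 : D.H) : ℕ := D.vertAt h0 / 2

/-- Total number of vertices of the diagram. -/
noncomputable def numVert (D : Diagram k) : ℕ :=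
  Nat.card {h : D.H // D.tau h = h} +
    (Nat.card D.H - Nat.card {h : D.H // D.tau h = h}) / 3

/-- Degree of the diagram: half its total number of vertices. -/
noncomputable def deg (D : Diagram k) : ℕ := D.numVert / 2

/-- Isomorphism of unitrivalent diagrams: a bijection of half-edges commuting with the
edge involution and the vertex rotation, and preserving the colors of univalent vertices. -/
def Iso (D E : Diagram k) : Prop :=
  ∃ e : D.H ≃ E.H,
    (∀ h, e (D.sig h) = E.sig (e h)) ∧
    (∀ h, e (D.tau h) = E.tau (e h)) ∧
    (∀ h, D.tau h = h → E.color (e h) = D.color h)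

end Diagram

/-- The free real vector space on (the type of) unitrivalent diagrams.  Together with the
relation `IsoRel` identifying isomorphic diagrams, quotienting by its span realizes the
vector space spanned by isomorphism classes of diagrams. -/
abbrev FreeD (k : ℕ) := Diagram k →₀ ℝ

noncomputable def fd {k : ℕ} (D : Diagram k) : FreeD k := Finsupp.single D 1

/-- Identify isomorphic diagrams. -/
def IsoRel (k : ℕ) : Set (FreeD k) :=
  {x | ∃ D E : Diagram k, Diagram.Iso D E ∧ x = fd D - fd E}

/-- The antisymmetry relation: reversing the cyclic ordering at one trivalent vertex
(the `tau`-orbit of `v`) negates the diagram, i.e. `D + D' = 0`. -/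
def ASRel (k : ℕ) : Set (FreeD k) :=
  {x | ∃ (D D' : Diagram k) (e : D.H ≃ D'.H) (v : D.H),
      D.tau v ≠ v ∧
      (∀ h, e (D.sig h) = D'.sig (e h)) ∧
      (∀ h, D.tau h = h → D'.color (e h) = D.color h) ∧
      (∀ h, (h = v ∨ h = D.tau v ∨ h = D.tau (D.tau v)) →
        D'.tau (e h) = e (D.tau (D.tau h))) ∧
      (∀ h, ¬(h = v ∨ h = D.tau v ∨ h = D.tau (D.tau v)) →
        D'.tau (e h) = e (D.tau h)) ∧
      x = fd D + fd D'}

/-- The IHX relation `I - H + X = 0`.  In `DI` the edge `{a, b}` joins the trivalent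
vertices `(a, h2, h1)` and `(b, h3, h4)` (cyclic orderings as recorded by `tau`);
`DH` and `DX` are the same diagram except that the two trivalent vertices are rewired
as `(a, h1, h3), (b, h4, h2)` resp. `(a, h1, h4), (b, h3, h2)`.  (With counterclockwise
cyclic orderings this is the standard I, H and X configurations on the four external
legs attached to `h1, h2, h3, h4`.) -/
def IHXRel (k : ℕ) : Set (FreeD k) :=
  {x | ∃ (DI DH DX : Diagram k) (eH : DI.H ≃ DH.H) (eX : DI.H ≃ DX.H)
      (a b h1 h2 h3 h4 : DI.H),
      DI.sig a = b ∧
      ([a, b, h1, h2, h3, h4] : List DI.H).Nodup ∧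
      DI.tau a = h2 ∧ DI.tau h2 = h1 ∧ DI.tau h1 = a ∧
      DI.tau b = h3 ∧ DI.tau h3 = h4 ∧ DI.tau h4 = b ∧
      (∀ h, eH (DI.sig h) = DH.sig (eH h)) ∧
      (∀ h, DI.tau h = h → DH.color (eH h) = DI.color h) ∧
      (∀ h, h ∉ ([a, b, h1, h2, h3, h4] : List DI.H) → eH (DI.tau h) = DH.tau (eH h)) ∧
      DH.tau (eH a) = eH h1 ∧ DH.tau (eH h1) = eH h3 ∧ DH.tau (eH h3) = eH a ∧
      DH.tau (eH b) = eH h4 ∧ DH.tau (eH h4) = eH h2 ∧ DH.tau (eH h2) = eH b ∧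
      (∀ h, eX (DI.sig h) = DX.sig (eX h)) ∧
      (∀ h, DI.tau h = h → DX.color (eX h) = DI.color h) ∧
      (∀ h, h ∉ ([a, b, h1, h2, h3, h4] : List DI.H) → eX (DI.tau h) = DX.tau (eX h)) ∧
      DX.tau (eX a) = eX h1 ∧ DX.tau (eX h1) = eX h4 ∧ DX.tau (eX h4) = eX a ∧
      DX.tau (eX b) = eX h3 ∧ DX.tau (eX h3) = eX h2 ∧ DX.tau (eX h2) = eX b ∧
      x = fd DI - fd DH + fd DX}

/-- Diagrams with a boring component are zero. -/
def BoringRel (k : ℕ) : Set (FreeD k) :=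
  {x | ∃ D : Diagram k, D.HasBoring ∧ x = fd D}

/-- A rooted tree: a unitrivalent graph which is a tree (Euler-count criterion), with a
distinguished (uncolored) univalent vertex `root`; the other univalent vertices carry
colors.  Used to form the link relations. -/
structure GraftTree (k : ℕ) where
  H : Type
  fin : Fintype H
  dec : DecidableEq H
  sig : H → H
  sig_invol : ∀ h, sig (sig h) = h
  sig_ne : ∀ h, sig h ≠ h
  tau : H → H
  tau_cube : ∀ h, tau (tau (tau h)) = h
  root : H
  root_fix : tau root = root
  color : H → Fin k
  conn : ∀ h, Relation.ReflTransGen (fun a b => b = sig a ∨ b = tau a) root h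
  tree : Nat.card H + 6 = 4 * Nat.card {h : H // tau h = h}

attribute [instance] GraftTree.fin GraftTree.dec

/-- The edge involution of the diagram obtained by grafting the rooted tree `X` at the
univalent vertex `u` of `E`: the edge of `E` at `u` is subdivided by a new trivalent
vertex `{root, false, true}`, whose half-edge `false` pairs with `u`, whose half-edge
`true` pairs with the old partner `E.sig u`, and whose half-edge `root` is paired
inside `X` (so the root edge of `X` is attached at the new vertex). -/
def graftSig {k : ℕ} (E : Diagram k) (u : E.H) (X : GraftTree k) :
    E.H ⊕ (X.H ⊕ Bool) → E.H ⊕ (X.H ⊕ Bool)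
  | Sum.inl h =>
    if h = u then Sum.inr (Sum.inr false)
    else if h = E.sig u then Sum.inr (Sum.inr true)
    else Sum.inl (E.sig h)
  | Sum.inr (Sum.inl x) => Sum.inr (Sum.inl (X.sig x))
  | Sum.inr (Sum.inr false) => Sum.inl u
  | Sum.inr (Sum.inr true) => Sum.inl (E.sig u)

/-- The vertex rotation of the grafted diagram: the root of `X` is merged into the new
trivalent vertex `(root, false, true)`; everything else is unchanged. -/
def graftTau {k : ℕ} (E : Diagram k) (_u : E.H) (X : GraftTree k) :
    E.H ⊕ (X.H ⊕ Bool) → E.H ⊕ (X.H ⊕ Bool)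
  | Sum.inl h => Sum.inl (E.tau h)
  | Sum.inr (Sum.inl x) =>
    if x = X.root then Sum.inr (Sum.inr false) else Sum.inr (Sum.inl (X.tau x))
  | Sum.inr (Sum.inr false) => Sum.inr (Sum.inr true)
  | Sum.inr (Sum.inr true) => Sum.inr (Sum.inl X.root)

def graftColor {k : ℕ} (E : Diagram k) (u : E.H) (X : GraftTree k) :
    E.H ⊕ (X.H ⊕ Bool) → Fin k
  | Sum.inl h => E.color h
  | Sum.inr (Sum.inl x) => X.color x
  | Sum.inr (Sum.inr _) => E.color u

/-- `G` is (isomorphic to) the diagram obtained by grafting `X` at `u`. -/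
def IsGraft {k : ℕ} (E : Diagram k) (u : E.H) (X : GraftTree k) (G : Diagram k) : Prop :=
  ∃ e : (E.H ⊕ (X.H ⊕ Bool)) ≃ G.H,
    (∀ p, e (graftSig E u X p) = G.sig (e p)) ∧
    (∀ p, e (graftTau E u X p) = G.tau (e p)) ∧
    (∀ p, graftTau E u X p = p → G.color (e p) = graftColor E u X p)

/-- The link relations (*): for every diagram `E`, color `i` and rooted tree `X`, the sum
over all univalent vertices `u` of `E` of color `i` of the diagrams obtained by grafting
`X` at `u` is zero. -/
def LinkRel (k : ℕ) : Set (FreeD k) :=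
  {x | ∃ (E : Diagram k) (i : Fin k) (X : GraftTree k) (g : E.H → Diagram k),
      (∀ u, E.tau u = u → E.color u = i → IsGraft E u X (g u)) ∧
      x = ∑ u ∈ Finset.univ.filter (fun u => E.tau u = u ∧ E.color u = i), fd (g u)}

/-- The relations defining `B^{hsl}(k)` (string links up to homotopy): isomorphism,
antisymmetry, IHX, and killing diagrams with boring components. -/
noncomputable def BhslRel (k : ℕ) : Submodule ℝ (FreeD k) :=
  Submodule.span ℝ (IsoRel k ∪ ASRel k ∪ IHXRel k ∪ BoringRel k)

/-- The relations defining `B^{hl}(k)`: those of `B^{hsl}(k)` together with the link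
relations (*). -/
noncomputable def BhlRel (k : ℕ) : Submodule ℝ (FreeD k) :=
  Submodule.span ℝ (IsoRel k ∪ ASRel k ∪ IHXRel k ∪ BoringRel k ∪ LinkRel k)

/-- The space `B^{hl}(k)` of unitrivalent diagrams for `k`-component links up to homotopy. -/
abbrev Bhl (k : ℕ) := FreeD k ⧸ BhlRel k

/-- The class of a diagram in `B^{hl}(k)`. -/
noncomputable def bhlClass {k : ℕ} (D : Diagram k) : Bhl k :=
  Submodule.Quotient.mk (fd D)

section Generic
variable {α : Type*} (s t : α → α)

/-- One step of the connectivity relation on half-edges. -/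
def GStep (a b : α) : Prop := b = s a ∨ b = t a

theorem gstep_rev (hs : ∀ a, s (s a) = a) (ht : ∀ a, t (t (t a)) = a)
    {a b : α} (h : GStep s t a b) :
    Relation.ReflTransGen (GStep s t) b a := by
  rcases h with h | h
  · exact Relation.ReflTransGen.single (Or.inl (by rw [h, hs]))
  · subst h
    have h2 : Relation.ReflTransGen (GStep s t) (t a) (t (t (t a))) :=
      Relation.ReflTransGen.tail (Relation.ReflTransGen.single (Or.inr rfl)) (Or.inr rfl)
    rwa [ht] at h2

theorem grtg_symm (hs : ∀ a, s (s a) = a) (ht : ∀ a, t (t (t a)) = a)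
    {a b : α} (h : Relation.ReflTransGen (GStep s t) a b) :
    Relation.ReflTransGen (GStep s t) b a := by
  induction h with
  | refl => exact .refl
  | tail _ hstep ih => exact ((gstep_rev s t hs ht hstep).trans ih)

theorem grtg_closed {S : Set α} (hS : ∀ a ∈ S, s a ∈ S ∧ t a ∈ S)
    {a b : α} (h : Relation.ReflTransGen (GStep s t) a b) (ha : a ∈ S) : b ∈ S := by
  induction h with
  | refl => exact ha
  | tail _ hstep ih =>
    rcases hstep with h | h <;> subst h
    · exact (hS _ ih).1
    · exact (hS _ ih).2

end Generic

namespace Diagram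

variable {k : ℕ} (D : Diagram k)

theorem reach_eq_rtg : D.Reach = Relation.ReflTransGen (GStep D.sig D.tau) := rfl

theorem Reach.symm {D : Diagram k} {a b : D.H} (h : D.Reach a b) : D.Reach b a :=
  grtg_symm D.sig D.tau D.sig_invol D.tau_cube h

theorem Reach.trans' {D : Diagram k} {a b c : D.H} (h : D.Reach a b) (h' : D.Reach b c) :
    D.Reach a c := Relation.ReflTransGen.trans h h'

theorem reach_sig (a : D.H) : D.Reach a (D.sig a) :=
  Relation.ReflTransGen.single (Or.inl rfl)

theorem reach_tau (a : D.H) : D.Reach a (D.tau a) :=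
  Relation.ReflTransGen.single (Or.inr rfl)

theorem tau_inj : Function.Injective D.tau := by
  intro a b h
  have := congrArg (D.tau ∘ D.tau) h
  simpa [Function.comp, D.tau_cube] using this

theorem tau_ne_of_ne {a : D.H} (h : D.tau a ≠ a) : D.tau (D.tau a) ≠ D.tau a :=
  fun hh => h (D.tau_inj hh)

theorem tau_sq_ne_of_ne {a : D.H} (h : D.tau a ≠ a) : D.tau (D.tau a) ≠ a := by
  intro hh
  apply h
  have h3 := D.tau_cube a
  rw [hh] at h3
  exact h3

theorem sig_inj : Function.Injective D.sig := by
  intro a b h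
  have := congrArg D.sig h
  simpa [D.sig_invol] using this

end Diagram
namespace Diagram

variable {k : ℕ} (D : Diagram k) (h0 : D.H)

theorem compSet_closed :
    ∀ a ∈ D.compSet h0, D.sig a ∈ D.compSet h0 ∧ D.tau a ∈ D.compSet h0 := by
  intro a ha
  exact ⟨ha.trans' (D.reach_sig a), ha.trans' (D.reach_tau a)⟩

theorem mem_compSet_self : h0 ∈ D.compSet h0 := Relation.ReflTransGen.refl

theorem reach_of_mem_compSet {D : Diagram k} {h0 a b : D.H}
    (ha : a ∈ D.compSet h0) (hb : b ∈ D.compSet h0) : D.Reach a b :=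
  Reach.trans' (Reach.symm ha) hb

theorem univIn_subset : D.univIn h0 ⊆ D.compSet h0 := fun _ h => h.1

theorem univIn_ncard (hcol : ∀ i : Fin k, ∃! x : D.H, x ∈ D.univIn h0 ∧ D.color x = i) :
    (D.univIn h0).ncard = k := by
  have e : ↥(D.univIn h0) ≃ Fin k := by
    apply Equiv.ofBijective (fun x => D.color x.1)
    constructor
    · rintro ⟨x, hx⟩ ⟨y, hy⟩ hxy
      have hu := hcol (D.color x)
      have h1 := hu.unique ⟨hx, rfl⟩ ⟨hy, hxy.symm⟩
      exact Subtype.ext h1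
    · intro i
      obtain ⟨x, hx, -⟩ := hcol i
      exact ⟨⟨x, hx.1⟩, hx.2⟩
  rw [← Nat.card_coe_set_eq, Nat.card_congr e, Nat.card_eq_fintype_card,
    Fintype.card_fin]

theorem sig_leaf_not_fixed (hk : 3 ≤ k)
    (htree : D.IsTreeAt h0)
    (hcol : ∀ i : Fin k, ∃! x : D.H, x ∈ D.univIn h0 ∧ D.color x = i) :
    ∀ z ∈ D.univIn h0, D.tau (D.sig z) ≠ D.sig z := by
  intro z hz hfix
  have hU := univIn_ncard D h0 hcol
  have hcard : (D.compSet h0).ncard + 6 = 4 * k := by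
    have h1 := htree; unfold IsTreeAt at h1; omega
  have hsub : D.compSet h0 ⊆ ({z, D.sig z} : Set D.H) := by
    intro x hx
    have hclosed : ∀ a ∈ ({z, D.sig z} : Set D.H),
        D.sig a ∈ ({z, D.sig z} : Set D.H) ∧ D.tau a ∈ ({z, D.sig z} : Set D.H) := by
      rintro a (rfl | ha)
      · exact ⟨Or.inr rfl, Or.inl hz.2⟩
      · rw [Set.mem_singleton_iff] at ha; subst ha
        exact ⟨Or.inl (D.sig_invol z), Or.inr hfix⟩
    exact grtg_closed D.sig D.tau hclosed (reach_of_mem_compSet hz.1 hx) (Or.inl rfl)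
  have h2 : (D.compSet h0).ncard ≤ 2 := by
    calc (D.compSet h0).ncard ≤ ({z, D.sig z} : Set D.H).ncard :=
          Set.ncard_le_ncard hsub (Set.toFinite _)
      _ ≤ 2 := by
          apply le_trans (Set.ncard_insert_le _ _)
          simp [Set.ncard_singleton]
  omega

/-- Existence of a "cherry": a trivalent vertex `{x, τx, τ²x}` two of whose edges lead
directly to univalent vertices (namely `sig x` and `sig (τ x)`). -/
theorem exists_cherry (hk : 3 ≤ k)
    (htree : D.IsTreeAt h0)
    (hcol : ∀ i : Fin k, ∃! x : D.H, x ∈ D.univIn h0 ∧ D.color x = i) :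
    ∃ x, D.Reach h0 x ∧ D.tau x ≠ x ∧ D.tau (D.sig x) = D.sig x ∧
      D.tau (D.sig (D.tau x)) = D.sig (D.tau x) := by
  classical
  by_contra hno
  push_neg at hno
  have hnf := sig_leaf_not_fixed D h0 hk htree hcol
  have hU : (D.univIn h0).ncard = k := univIn_ncard D h0 hcol
  set Cfin := (Set.toFinite (D.compSet h0)).toFinset with hC
  set Ufin := (Set.toFinite (D.univIn h0)).toFinset with hUf
  have hCe : (D.compSet h0).ncard = Cfin.card :=
    Set.ncard_eq_toFinset_card _ (Set.toFinite _)
  have hUe : (D.univIn h0).ncard = Ufin.card :=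
    Set.ncard_eq_toFinset_card _ (Set.toFinite _)
  have h1 := htree; unfold IsTreeAt at h1
  have hCcard : Cfin.card + 6 = 4 * k := by omega
  have hUcard : Ufin.card = k := by omega
  -- the cherry-free hypothesis, specialized
  set orbF : D.H → Finset D.H := fun x => {x, D.tau x, D.tau (D.tau x)} with horb
  have tau_mem_orbF : ∀ x y, y ∈ orbF x → D.tau y ∈ orbF x := by
    intro x y hy
    simp only [horb, Finset.mem_insert, Finset.mem_singleton] at hy ⊢
    rcases hy with rfl | rfl | rfl
    · tauto
    · tauto
    · exact Or.inl (D.tau_cube x)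
  have mem_orbF_self : ∀ x, x ∈ orbF x := by
    intro x; simp [horb]
  have hzU : ∀ z ∈ Ufin, z ∈ D.univIn h0 := by
    intro z hz; rwa [Set.Finite.mem_toFinset] at hz
  have horbsub : ∀ z ∈ Ufin, orbF (D.sig z) ⊆ Cfin \ Ufin := by
    intro z hz y hy
    have hz' := hzU z hz
    have hnf' := hnf z hz'
    have hreach : D.Reach h0 (D.sig z) := hz'.1.trans' (D.reach_sig z)
    have hyval : y = D.sig z ∨ y = D.tau (D.sig z) ∨ y = D.tau (D.tau (D.sig z)) := by
      simpa [horb] using hy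
    have hynf : D.tau y ≠ y := by
      rcases hyval with rfl | rfl | rfl
      · exact hnf'
      · exact D.tau_ne_of_ne hnf'
      · exact D.tau_ne_of_ne (D.tau_ne_of_ne hnf')
    have hyreach : D.Reach h0 y := by
      rcases hyval with rfl | rfl | rfl
      · exact hreach
      · exact hreach.trans' (D.reach_tau _)
      · exact (hreach.trans' (D.reach_tau _)).trans' (D.reach_tau _)
    rw [Finset.mem_sdiff, Set.Finite.mem_toFinset, Set.Finite.mem_toFinset]
    exact ⟨hyreach, fun hmem => hynf hmem.2⟩
  have horbcard : ∀ z ∈ Ufin, (orbF (D.sig z)).card = 3 := by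
    intro z hz
    have hnf' := hnf z (hzU z hz)
    set x := D.sig z
    have h1 : D.tau x ≠ x := hnf'
    have h2 : D.tau (D.tau x) ≠ x := D.tau_sq_ne_of_ne hnf'
    have h3 : D.tau (D.tau x) ≠ D.tau x := D.tau_ne_of_ne hnf'
    simp only [horb]
    rw [Finset.card_insert_of_notMem (by simp [h1.symm, h2.symm]),
      Finset.card_insert_of_notMem (by simp [h3.symm]), Finset.card_singleton]
  have hdisj : ∀ z ∈ Ufin, ∀ w ∈ Ufin, z ≠ w →
      Disjoint (orbF (D.sig z)) (orbF (D.sig w)) := by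
    intro z hz w hw hzw
    rw [Finset.disjoint_left]
    intro y hyz hyw
    -- sig w is in the tau-closure of y, hence in orbF (sig z)
    have hsw : D.sig w ∈ orbF (D.sig z) := by
      have hyval : y = D.sig w ∨ y = D.tau (D.sig w) ∨ y = D.tau (D.tau (D.sig w)) := by
        simpa [horb] using hyw
      rcases hyval with rfl | hy1 | hy2
      · exact hyz
      · have : D.sig w = D.tau (D.tau y) := by rw [hy1, D.tau_cube]
        rw [this]; exact tau_mem_orbF _ _ (tau_mem_orbF _ _ hyz)
      · have : D.sig w = D.tau y := by rw [hy2, D.tau_cube]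
        rw [this]; exact tau_mem_orbF _ _ hyz
    have hzu := hzU z hz
    have hwu := hzU w hw
    have hreach : D.Reach h0 (D.sig z) := hzu.1.trans' (D.reach_sig z)
    have hnfz := hnf z hzu
    have hswval : D.sig w = D.sig z ∨ D.sig w = D.tau (D.sig z) ∨
        D.sig w = D.tau (D.tau (D.sig z)) := by simpa [horb] using hsw
    rcases hswval with h | h | h
    · exact hzw (D.sig_inj h.symm)
    · -- cherry at sig z
      refine hno (D.sig z) hreach hnfz ?_ ?_
      · rw [D.sig_invol]; exact hzu.2
      · rw [← h, D.sig_invol]; exact hwu.2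
    · -- cherry at τ² (sig z)
      refine hno (D.tau (D.tau (D.sig z)))
        ((hreach.trans' (D.reach_tau _)).trans' (D.reach_tau _))
        (D.tau_ne_of_ne (D.tau_ne_of_ne hnfz)) ?_ ?_
      · rw [← h, D.sig_invol]; exact hwu.2
      · rw [D.tau_cube, D.sig_invol]; exact hzu.2
  -- cardinality contradiction
  have hbi : (Ufin.biUnion (fun z => orbF (D.sig z))).card = 3 * k := by
    rw [Finset.card_biUnion hdisj]
    rw [Finset.sum_congr rfl horbcard, Finset.sum_const, hUcard, smul_eq_mul, mul_comm]
  have hsubN : Ufin.biUnion (fun z => orbF (D.sig z)) ⊆ Cfin \ Ufin := by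
    intro y hy
    rw [Finset.mem_biUnion] at hy
    obtain ⟨z, hz, hyz⟩ := hy
    exact horbsub z hz hyz
  have hle := Finset.card_le_card hsubN
  have hUC : Ufin ⊆ Cfin := by
    intro y hy
    rw [Set.Finite.mem_toFinset] at hy ⊢
    exact hy.1
  have hsd : (Cfin \ Ufin).card = Cfin.card - Ufin.card := Finset.card_sdiff_of_subset hUC
  omega
end Diagram

/-- All the data for the main argument: a diagram `D`, the distinguished tree component
(at `h0`) with one leg of each color, and a cherry `{x, τx, τ²x}` in it. -/
structure Setup (k : ℕ) where
  D : Diagram k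
  h0 : D.H
  hk : 3 ≤ k
  htree : D.IsTreeAt h0
  hcol : ∀ i : Fin k, ∃! z : D.H, z ∈ D.univIn h0 ∧ D.color z = i
  x : D.H
  hxreach : D.Reach h0 x
  hxnf : D.tau x ≠ x
  hpfix : D.tau (D.sig x) = D.sig x
  hqfix : D.tau (D.sig (D.tau x)) = D.sig (D.tau x)

namespace Setup

variable {k : ℕ} (S : Setup k)

/-- the cherry trivalent vertex's half-edge towards the leaf `p` -/
def p' : S.D.H := S.x
/-- the cherry trivalent vertex's half-edge towards the leaf `q` -/
def q' : S.D.H := S.D.tau S.x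
/-- the cherry trivalent vertex's half-edge into the rest of the tree -/
def t : S.D.H := S.D.tau (S.D.tau S.x)
/-- the leaf paired with `p'` -/
def p : S.D.H := S.D.sig S.p'
/-- the leaf paired with `q'` -/
def q : S.D.H := S.D.sig S.q'
/-- color of the leaf `p` -/
def c : Fin k := S.D.color S.p
/-- color of the leaf `q` -/
def d : Fin k := S.D.color S.q

theorem tau_p' : S.D.tau S.p' = S.q' := rfl
theorem tau_q' : S.D.tau S.q' = S.t := rfl
theorem tau_t : S.D.tau S.t = S.p' := S.D.tau_cube S.x
theorem sig_p : S.D.sig S.p = S.p' := S.D.sig_invol _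
theorem sig_q : S.D.sig S.q = S.q' := S.D.sig_invol _
theorem tau_p : S.D.tau S.p = S.p := S.hpfix
theorem tau_q : S.D.tau S.q = S.q := S.hqfix
theorem p'_nf : S.D.tau S.p' ≠ S.p' := S.hxnf
theorem q'_nf : S.D.tau S.q' ≠ S.q' := S.D.tau_ne_of_ne S.hxnf
theorem t_nf : S.D.tau S.t ≠ S.t := S.D.tau_ne_of_ne (S.D.tau_ne_of_ne S.hxnf)

theorem p'_ne_q' : S.p' ≠ S.q' := fun h => S.p'_nf h.symm
theorem q'_ne_t : S.q' ≠ S.t := fun h => S.q'_nf h.symm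
theorem p'_ne_t : S.p' ≠ S.t := fun h => (S.D.tau_sq_ne_of_ne S.hxnf) h.symm
theorem p_ne_q : S.p ≠ S.q := fun h => S.p'_ne_q' (S.D.sig_inj (by rw [← sig_p, ← sig_q, h]))
theorem p_ne_p' : S.p ≠ S.p' := fun h => S.D.sig_ne S.p' h
theorem q_ne_q' : S.q ≠ S.q' := fun h => S.D.sig_ne S.q' h
theorem p_ne_q' : S.p ≠ S.q' := fun h => S.q'_nf (by rw [← h, S.tau_p, h])
theorem p_ne_t : S.p ≠ S.t := fun h => S.t_nf (by rw [← h, S.tau_p, h])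
theorem q_ne_p' : S.q ≠ S.p' := fun h => S.p'_nf (by rw [← h, S.tau_q, h])
theorem q_ne_t : S.q ≠ S.t := fun h => S.t_nf (by rw [← h, S.tau_q, h])

theorem p'_mem : S.D.Reach S.h0 S.p' := S.hxreach
theorem q'_mem : S.D.Reach S.h0 S.q' := S.hxreach.trans' (S.D.reach_tau _)
theorem t_mem : S.D.Reach S.h0 S.t := S.q'_mem.trans' (S.D.reach_tau _)
theorem p_mem : S.D.Reach S.h0 S.p := S.p'_mem.trans' (S.D.reach_sig _)
theorem q_mem : S.D.Reach S.h0 S.q := S.q'_mem.trans' (S.D.reach_sig _)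

theorem p_univ : S.p ∈ S.D.univIn S.h0 := ⟨S.p_mem, S.tau_p⟩
theorem q_univ : S.q ∈ S.D.univIn S.h0 := ⟨S.q_mem, S.tau_q⟩

theorem c_ne_d : S.c ≠ S.d := by
  intro h
  have hu := S.hcol S.c
  exact S.p_ne_q (hu.unique ⟨S.p_univ, rfl⟩ ⟨S.q_univ, h.symm⟩)

/-- the half-edges of the rooted tree `X` (the old component minus the cherry) -/
def XP (h : S.D.H) : Prop :=
  S.D.Reach S.h0 h ∧ h ≠ S.p ∧ h ≠ S.q ∧ h ≠ S.p' ∧ h ≠ S.q'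

theorem t_XP : S.XP S.t :=
  ⟨S.t_mem, (S.p_ne_t).symm, (S.q_ne_t).symm, (S.p'_ne_t).symm, (S.q'_ne_t).symm⟩

theorem XP_sig {h : S.D.H} (hh : S.XP h) : S.XP (S.D.sig h) := by
  obtain ⟨hr, h1, h2, h3, h4⟩ := hh
  refine ⟨hr.trans' (S.D.reach_sig h), ?_, ?_, ?_, ?_⟩
  · intro he
    exact h3 (by calc h = S.D.sig (S.D.sig h) := (S.D.sig_invol h).symm
      _ = S.D.sig S.p := by rw [he]
      _ = S.p' := S.sig_p)
  · intro he
    exact h4 (by calc h = S.D.sig (S.D.sig h) := (S.D.sig_invol h).symm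
      _ = S.D.sig S.q := by rw [he]
      _ = S.q' := S.sig_q)
  · intro he; exact h1 (S.D.sig_inj (by rw [he, S.sig_p]))
  · intro he; exact h2 (S.D.sig_inj (by rw [he, S.sig_q]))

theorem XP_tau {h : S.D.H} (hh : S.XP h) (hne : h ≠ S.t) : S.XP (S.D.tau h) := by
  obtain ⟨hr, h1, h2, h3, h4⟩ := hh
  refine ⟨hr.trans' (S.D.reach_tau h), ?_, ?_, ?_, ?_⟩
  · intro he
    exact h1 (by calc h = S.D.tau (S.D.tau (S.D.tau h)) := (S.D.tau_cube h).symm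
      _ = S.D.tau (S.D.tau S.p) := by rw [he]
      _ = S.p := by rw [S.tau_p, S.tau_p])
  · intro he
    exact h2 (by calc h = S.D.tau (S.D.tau (S.D.tau h)) := (S.D.tau_cube h).symm
      _ = S.D.tau (S.D.tau S.q) := by rw [he]
      _ = S.q := by rw [S.tau_q, S.tau_q])
  · intro he
    exact hne (by calc h = S.D.tau (S.D.tau (S.D.tau h)) := (S.D.tau_cube h).symm
      _ = S.D.tau (S.D.tau S.p') := by rw [he]
      _ = S.t := by rw [S.tau_p', S.tau_q'])
  · intro he
    exact h3 (by calc h = S.D.tau (S.D.tau (S.D.tau h)) := (S.D.tau_cube h).symm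
      _ = S.D.tau (S.D.tau S.q') := by rw [he]
      _ = S.p' := by rw [S.tau_q', S.tau_t])

end Setup
namespace Setup

variable {k : ℕ} (S : Setup k)

/-- Half-edges of the auxiliary diagram `E`: everything outside the component of `h0`,
plus a two-half-edge strut. -/
def EH : Type := {h : S.D.H // ¬ S.D.Reach S.h0 h} ⊕ Bool

instance : Finite S.EH := by unfold EH; infer_instance

def Esig : S.EH → S.EH
  | .inl ⟨a, ha⟩ => .inl ⟨S.D.sig a, fun hr => ha (by
      have h2 := hr.trans' (S.D.reach_sig (S.D.sig a))
      rwa [S.D.sig_invol] at h2)⟩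
  | .inr b => .inr (!b)

def Etau : S.EH → S.EH
  | .inl ⟨a, ha⟩ => .inl ⟨S.D.tau a, fun hr => ha (by
      have h2 := (hr.trans' (S.D.reach_tau _)).trans' (S.D.reach_tau _)
      rwa [S.D.tau_cube] at h2)⟩
  | .inr b => .inr b

def Ecolor : S.EH → Fin k
  | .inl ⟨a, _⟩ => S.D.color a
  | .inr false => S.c
  | .inr true => S.d

theorem Esig_invol : ∀ h, S.Esig (S.Esig h) = h := by
  rintro (⟨a, ha⟩ | b)
  · exact congrArg Sum.inl (Subtype.ext (S.D.sig_invol a))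
  · cases b <;> rfl

theorem Esig_ne : ∀ h, S.Esig h ≠ h := by
  rintro (⟨a, ha⟩ | b) he
  · exact S.D.sig_ne a (congrArg Subtype.val (Sum.inl.inj he))
  · rw [Esig] at he
    have := Sum.inr.inj he
    simp at this

theorem Etau_cube : ∀ h, S.Etau (S.Etau (S.Etau h)) = h := by
  rintro (⟨a, ha⟩ | b)
  · exact congrArg Sum.inl (Subtype.ext (S.D.tau_cube a))
  · rfl

theorem liftE {a b : S.D.H} (hab : S.D.Reach a b) (ha : ¬ S.D.Reach S.h0 a) :
    ∀ hb : ¬ S.D.Reach S.h0 b,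
      Relation.ReflTransGen (GStep S.Esig S.Etau) (.inl ⟨a, ha⟩) (.inl ⟨b, hb⟩) := by
  induction hab with
  | refl => intro hb; exact .refl
  | @tail b' b hab' hstep ih =>
    intro hb
    have hb' : ¬ S.D.Reach S.h0 b' := fun hr => ha (hr.trans' (Diagram.Reach.symm hab'))
    rcases hstep with h | h <;> subst h
    · exact (ih hb').tail (Or.inl rfl)
    · exact (ih hb').tail (Or.inr rfl)

theorem Econn : ∀ h : S.EH, ∃ h',
    Relation.ReflTransGen (GStep S.Esig S.Etau) h h' ∧ S.Etau h' = h' := by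
  rintro (⟨a, ha⟩ | b)
  · obtain ⟨h', hh', hfix⟩ := S.D.conn a
    have hb : ¬ S.D.Reach S.h0 h' := fun hr => ha (hr.trans' (Diagram.Reach.symm hh'))
    exact ⟨.inl ⟨h', hb⟩, S.liftE hh' ha hb, congrArg Sum.inl (Subtype.ext hfix)⟩
  · exact ⟨.inr b, .refl, rfl⟩

/-- The auxiliary diagram `E`: `D` minus the component of `h0`, plus a strut with
colors `c`, `d`. -/
noncomputable def E : Diagram k where
  H := S.EH
  fin := Fintype.ofFinite _
  dec := Classical.decEq _
  sig := S.Esig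
  sig_invol := S.Esig_invol
  sig_ne := S.Esig_ne
  tau := S.Etau
  tau_cube := S.Etau_cube
  color := S.Ecolor
  conn := S.Econn

theorem E_reach_eq :
    S.E.Reach = Relation.ReflTransGen (GStep S.Esig S.Etau) := rfl

/-- distinguished univalent vertex of `E`: the `c`-colored end of the strut -/
noncomputable def u : S.E.H := Sum.inr false
/-- the `d`-colored end of the strut -/
noncomputable def w : S.E.H := Sum.inr true

theorem Eu_fix : S.E.tau S.u = S.u := rfl
theorem Eu_col : S.E.color S.u = S.c := rfl
theorem Ew_fix : S.E.tau S.w = S.w := rfl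
theorem Ew_col : S.E.color S.w = S.d := rfl
theorem Esig_u : S.E.sig S.u = S.w := rfl

end Setup
namespace Setup

variable {k : ℕ} (S : Setup k)

def XH : Type := {h : S.D.H // S.XP h}

instance : Finite S.XH := by unfold XH; infer_instance

def Xsig : S.XH → S.XH := fun a => ⟨S.D.sig a.1, S.XP_sig a.2⟩

noncomputable def Xtau : S.XH → S.XH := fun a =>
  if h : a.1 = S.t then ⟨S.t, S.t_XP⟩ else ⟨S.D.tau a.1, S.XP_tau a.2 h⟩

noncomputable def Xroot : S.XH := ⟨S.t, S.t_XP⟩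

theorem Xtau_of_ne {a : S.XH} (h : a.1 ≠ S.t) : S.Xtau a = ⟨S.D.tau a.1, S.XP_tau a.2 h⟩ :=
  dif_neg h

theorem Xtau_root : S.Xtau S.Xroot = S.Xroot := dif_pos rfl

theorem tau_ne_t {a : S.D.H} (ha : S.XP a) (h : a ≠ S.t) : S.D.tau a ≠ S.t := by
  intro he
  exact ha.2.2.2.2 (by calc a = S.D.tau (S.D.tau (S.D.tau a)) := (S.D.tau_cube a).symm
    _ = S.D.tau (S.D.tau S.t) := by rw [he]
    _ = S.q' := by rw [S.tau_t, S.tau_p'])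

theorem Xtau_cube : ∀ a, S.Xtau (S.Xtau (S.Xtau a)) = a := by
  rintro ⟨a, ha⟩
  by_cases h : a = S.t
  · subst h
    have : (⟨S.t, ha⟩ : S.XH) = S.Xroot := Subtype.ext rfl
    rw [this, Xtau_root, Xtau_root, Xtau_root]
  · have h1 : S.D.tau a ≠ S.t := S.tau_ne_t ha h
    have h2 : S.D.tau (S.D.tau a) ≠ S.t := by
      intro he
      exact ha.2.2.2.1 (by calc a = S.D.tau (S.D.tau (S.D.tau a)) := (S.D.tau_cube a).symm
        _ = S.D.tau S.t := by rw [he]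
        _ = S.p' := S.tau_t)
    have e1 : S.Xtau ⟨a, ha⟩ = ⟨S.D.tau a, S.XP_tau ha h⟩ := S.Xtau_of_ne h
    have e2 : S.Xtau ⟨S.D.tau a, S.XP_tau ha h⟩ =
        ⟨S.D.tau (S.D.tau a), S.XP_tau (S.XP_tau ha h) h1⟩ := S.Xtau_of_ne h1
    have e3 : S.Xtau ⟨S.D.tau (S.D.tau a), S.XP_tau (S.XP_tau ha h) h1⟩ =
        ⟨S.D.tau (S.D.tau (S.D.tau a)),
          S.XP_tau (S.XP_tau (S.XP_tau ha h) h1) h2⟩ := S.Xtau_of_ne h2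
    rw [e1, e2, e3]
    exact Subtype.ext (S.D.tau_cube a)

theorem Xconn_aux : ∀ {a : S.D.H}, S.D.Reach S.t a → ∀ ha : S.XP a,
    Relation.ReflTransGen (GStep S.Xsig S.Xtau) S.Xroot ⟨a, ha⟩ := by
  intro a hta
  induction hta with
  | refl => intro ha; exact .refl
  | @tail b' a hab' hstep ih =>
    intro ha
    by_cases hb' : S.XP b'
    · rcases hstep with h | h <;> subst h
      · exact (ih hb').tail (Or.inl (Subtype.ext rfl))
      · by_cases hbt : b' = S.t
        · exact absurd (by rw [hbt]; exact S.tau_t) (fun he => ha.2.2.2.1 he)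
        · exact (ih hb').tail (Or.inr (by rw [S.Xtau_of_ne (a := ⟨b', hb'⟩) hbt]))
    · have hb'comp : S.D.Reach S.h0 b' := S.t_mem.trans' hab'
      have hval : b' = S.p ∨ b' = S.q ∨ b' = S.p' ∨ b' = S.q' := by
        by_contra hc
        push_neg at hc
        exact hb' ⟨hb'comp, hc.1, hc.2.1, hc.2.2.1, hc.2.2.2⟩
      rcases hval with rfl | rfl | rfl | rfl <;> rcases hstep with h | h
      · exact absurd (h.trans (S.sig_p)) ha.2.2.2.1
      · exact absurd (h.trans (S.tau_p)) ha.2.1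
      · exact absurd (h.trans (S.sig_q)) ha.2.2.2.2
      · exact absurd (h.trans (S.tau_q)) ha.2.2.1
      · exact absurd (ha.2.1 h) not_false
      · exact absurd (h.trans (S.tau_p')) ha.2.2.2.2
      · exact absurd (ha.2.2.1 h) not_false
      · -- a = τ q' = t : done, it is the root
        have : a = S.t := h.trans (S.tau_q')
        subst this
        exact .refl

end Setup
namespace Setup

variable {k : ℕ} (S : Setup k)

theorem XPset_eq : {h | S.XP h} = S.D.compSet S.h0 \ {S.p, S.q, S.p', S.q'} := by
  ext h
  simp only [Set.mem_setOf_eq, Set.mem_diff, Set.mem_insert_iff, Set.mem_singleton_iff]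
  unfold XP
  constructor
  · rintro ⟨hr, h1, h2, h3, h4⟩; exact ⟨hr, by tauto⟩
  · rintro ⟨hr, hn⟩; push_neg at hn; exact ⟨hr, hn.1, hn.2.1, hn.2.2.1, hn.2.2.2⟩

theorem four_subset : ({S.p, S.q, S.p', S.q'} : Set S.D.H) ⊆ S.D.compSet S.h0 := by
  rintro z (rfl | rfl | rfl | rfl)
  · exact S.p_mem
  · exact S.q_mem
  · exact S.p'_mem
  · exact S.q'_mem

theorem four_ncard : ({S.p, S.q, S.p', S.q'} : Set S.D.H).ncard = 4 := by
  rw [Set.ncard_insert_of_notMem (by simp [S.p_ne_q, S.p_ne_p', S.p_ne_q']),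
    Set.ncard_insert_of_notMem (by simp [S.q_ne_p', S.q_ne_q']),
    Set.ncard_insert_of_notMem (by simp [S.p'_ne_q']), Set.ncard_singleton]

theorem XP_ncard : {h | S.XP h}.ncard + 4 = (S.D.compSet S.h0).ncard := by
  have hle : ({S.p, S.q, S.p', S.q'} : Set S.D.H).ncard ≤ (S.D.compSet S.h0).ncard :=
    Set.ncard_le_ncard S.four_subset (Set.toFinite _)
  have hdiff := Set.ncard_diff S.four_subset (Set.toFinite _)
  rw [S.XPset_eq, hdiff, S.four_ncard]
  rw [S.four_ncard] at hle
  omega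

/-- The univalent vertices of the rooted tree `X`, viewed inside `D`, plus the root. -/
def Fset : Set S.D.H := insert S.t (S.D.univIn S.h0 \ {S.p, S.q})

theorem Fset_ncard : S.Fset.ncard + 1 = (S.D.univIn S.h0).ncard := by
  have h2 : ({S.p, S.q} : Set S.D.H) ⊆ S.D.univIn S.h0 := by
    rintro z (rfl | rfl)
    · exact S.p_univ
    · exact S.q_univ
  have hle : ({S.p, S.q} : Set S.D.H).ncard ≤ (S.D.univIn S.h0).ncard :=
    Set.ncard_le_ncard h2 (Set.toFinite _)
  have hdiff := Set.ncard_diff h2 (Set.toFinite _)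
  have hpair : ({S.p, S.q} : Set S.D.H).ncard = 2 := by
    rw [Set.ncard_insert_of_notMem (by simp [S.p_ne_q]), Set.ncard_singleton]
  have hins : S.Fset.ncard = (S.D.univIn S.h0 \ {S.p, S.q}).ncard + 1 := by
    unfold Fset
    rw [Set.ncard_insert_of_notMem (by
      rintro ⟨hu, -⟩
      exact S.t_nf hu.2)]
  rw [hpair] at hdiff hle
  -- need univIn has at least p and q, i.e. ncard ≥ 2
  rw [hins, hdiff]
  omega

theorem card_Xfix : Nat.card {z : S.XH // S.Xtau z = z} = S.Fset.ncard := by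
  rw [← Nat.card_coe_set_eq]
  refine Nat.card_congr ?_
  refine Equiv.mk (fun z => ⟨z.1.1, ?_⟩) (fun w => ⟨⟨w.1, ?_⟩, ?_⟩) ?_ ?_
  · -- z.1.1 ∈ Fset
    obtain ⟨⟨a, ha⟩, hz⟩ := z
    by_cases hat : a = S.t
    · exact Or.inl hat
    · right
      have := congrArg Subtype.val ((S.Xtau_of_ne (a := ⟨a, ha⟩) hat).symm.trans hz)
      exact ⟨⟨ha.1, this⟩, by simp [ha.2.1, ha.2.2.1]⟩
  · -- XP w.1
    rcases w.2 with h | ⟨hu, hnm⟩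
    · rw [h]; exact S.t_XP
    · simp only [Set.mem_insert_iff, Set.mem_singleton_iff] at hnm
      push_neg at hnm
      refine ⟨hu.1, hnm.1, hnm.2, ?_, ?_⟩
      · intro he; exact S.p'_nf (by rw [← he]; exact hu.2)
      · intro he; exact S.q'_nf (by rw [← he]; exact hu.2)
  · -- Xtau fixes it
    rcases w.2 with h | ⟨hu, hnm⟩
    · have : w.1 = S.t := h
      exact Subtype.ext (by simp [Xtau, this])
    · have hwt : w.1 ≠ S.t := by
        intro he; exact S.t_nf (by rw [← he]; exact hu.2)
      exact (S.Xtau_of_ne (a := _) hwt).trans (Subtype.ext hu.2)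
  · intro z; exact Subtype.ext (Subtype.ext rfl)
  · intro w; exact Subtype.ext rfl

theorem Xsig_invol : ∀ a, S.Xsig (S.Xsig a) = a :=
  fun a => Subtype.ext (S.D.sig_invol a.1)

theorem Xsig_ne : ∀ a, S.Xsig a ≠ a :=
  fun a he => S.D.sig_ne a.1 (congrArg Subtype.val he)

theorem Xtree : Nat.card S.XH + 6 = 4 * Nat.card {z : S.XH // S.Xtau z = z} := by
  have h1 : Nat.card S.XH = {h | S.XP h}.ncard := by
    rw [← Nat.card_coe_set_eq]
    exact Nat.card_congr (Equiv.subtypeEquivRight (fun _ => Iff.rfl))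
  have h2 := S.XP_ncard
  have h3 := S.card_Xfix
  have h4 := S.Fset_ncard
  have h5 := S.htree
  unfold Diagram.IsTreeAt at h5
  have h6 : 1 ≤ (S.D.univIn S.h0).ncard := by omega
  omega

/-- The rooted tree `X`: the component of `h0` minus the cherry (two leaves `p`, `q`
and the trivalent vertex), rooted at the third half-edge `t` of the cherry vertex. -/
noncomputable def X : GraftTree k where
  H := S.XH
  fin := Fintype.ofFinite _
  dec := Classical.decEq _
  sig := S.Xsig
  sig_invol := S.Xsig_invol
  sig_ne := S.Xsig_ne
  tau := S.Xtau
  tau_cube := S.Xtau_cube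
  root := S.Xroot
  root_fix := S.Xtau_root
  color := fun a => S.D.color a.1
  conn := fun a => S.Xconn_aux (S.D.reach_of_mem_compSet S.t_mem a.2.1) a.2
  tree := S.Xtree

end Setup
section GraftD

variable {k : ℕ} (E : Diagram k) (u : E.H) (X : GraftTree k)

theorem GraftTree.tau_eq_root_iff {X : GraftTree k} {x : X.H} (h : X.tau x = X.root) :
    x = X.root := by
  have h3 := X.tau_cube x
  rw [h, X.root_fix, X.root_fix] at h3
  exact h3.symm

theorem graftSig_invol : ∀ h, graftSig E u X (graftSig E u X h) = h := by
  rintro (a | x | b)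
  · by_cases h1 : a = u
    · subst h1; simp [graftSig]
    · by_cases h2 : a = E.sig u
      · subst h2
        simp [graftSig, h1]
      · simp only [graftSig, if_neg h1, if_neg h2]
        rw [if_neg, if_neg, E.sig_invol]
        · intro he; exact h1 (E.sig_inj he)
        · intro he; exact h2 (by rw [← E.sig_invol a, he])
  · simp [graftSig, X.sig_invol]
  · cases b <;> simp [graftSig, E.sig_ne u]

theorem graftSig_ne : ∀ h, graftSig E u X h ≠ h := by
  rintro (a | x | b)
  · by_cases h1 : a = u
    · subst h1; simp [graftSig]
    · by_cases h2 : a = E.sig u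
      · subst h2; simp [graftSig, if_neg h1]
      · simp only [graftSig, if_neg h1, if_neg h2]
        intro he
        exact E.sig_ne a (Sum.inl.inj he)
  · simp only [graftSig]
    intro he
    exact X.sig_ne x (Sum.inl.inj (Sum.inr.inj he))
  · cases b <;> simp [graftSig]

theorem graftTau_cube : ∀ h, graftTau E u X (graftTau E u X (graftTau E u X h)) = h := by
  rintro (a | x | b)
  · simp [graftTau, E.tau_cube]
  · by_cases hx : x = X.root
    · subst hx; simp [graftTau]
    · have h1 : X.tau x ≠ X.root := fun he => hx (GraftTree.tau_eq_root_iff he)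
      have h2 : X.tau (X.tau x) ≠ X.root := fun he => h1 (GraftTree.tau_eq_root_iff he)
      simp only [graftTau, if_neg hx, if_neg h1, if_neg h2, X.tau_cube]
  · cases b <;> simp [graftTau]

/-- The canonical diagram obtained by grafting `X` at `u`. -/
noncomputable def GraftD : Diagram k where
  H := E.H ⊕ (X.H ⊕ Bool)
  fin := by infer_instance
  dec := by infer_instance
  sig := graftSig E u X
  sig_invol := graftSig_invol E u X
  sig_ne := graftSig_ne E u X
  tau := graftTau E u X
  tau_cube := graftTau_cube E u X
  color := graftColor E u X
  conn := by
    have reach_symm : ∀ {a b : E.H ⊕ (X.H ⊕ Bool)},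
        Relation.ReflTransGen (GStep (graftSig E u X) (graftTau E u X)) a b →
        Relation.ReflTransGen (GStep (graftSig E u X) (graftTau E u X)) b a :=
      fun h => grtg_symm _ _ (graftSig_invol E u X) (graftTau_cube E u X) h
    -- lift of E-paths
    have liftE : ∀ {a b : E.H}, E.Reach a b →
        Relation.ReflTransGen (GStep (graftSig E u X) (graftTau E u X))
          (Sum.inl a) (Sum.inl b) := by
      intro a b hab
      induction hab with
      | refl => exact .refl
      | @tail b' b hab' hstep ih =>
        rcases hstep with h | h <;> subst h
        · by_cases h1 : b' = u
          · rw [h1] at ih ⊢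
            have s1 : GStep (graftSig E u X) (graftTau E u X) (Sum.inl u)
                (Sum.inr (Sum.inr false)) := Or.inl (by simp [graftSig])
            have s2 : GStep (graftSig E u X) (graftTau E u X) (Sum.inr (Sum.inr false))
                (Sum.inr (Sum.inr true)) := Or.inr rfl
            have s3 : GStep (graftSig E u X) (graftTau E u X) (Sum.inr (Sum.inr true))
                (Sum.inl (E.sig u)) := Or.inl rfl
            exact ((ih.tail s1).tail s2).tail s3
          · by_cases h2 : b' = E.sig u
            · rw [h2] at ih ⊢
              rw [E.sig_invol]
              have s1 : GStep (graftSig E u X) (graftTau E u X) (Sum.inl (E.sig u))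
                  (Sum.inr (Sum.inr true)) := Or.inl (by simp [graftSig, E.sig_ne u])
              have s2 : GStep (graftSig E u X) (graftTau E u X) (Sum.inr (Sum.inr true))
                  (Sum.inr (Sum.inl X.root)) := Or.inr rfl
              have s3 : GStep (graftSig E u X) (graftTau E u X) (Sum.inr (Sum.inl X.root))
                  (Sum.inr (Sum.inr false)) := Or.inr (by simp [graftTau])
              have s4 : GStep (graftSig E u X) (graftTau E u X) (Sum.inr (Sum.inr false))
                  (Sum.inl u) := Or.inl rfl
              exact (((ih.tail s1).tail s2).tail s3).tail s4
            · exact ih.tail (Or.inl (by simp [graftSig, if_neg h1, if_neg h2]))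
        · exact ih.tail (Or.inr rfl)
    -- lift of X-paths from the root
    have liftX : ∀ {x : X.H},
        Relation.ReflTransGen (GStep (graftSig E u X) (graftTau E u X))
          (Sum.inr (Sum.inl X.root)) (Sum.inr (Sum.inl x)) := by
      intro x
      have hx := X.conn x
      induction hx with
      | refl => exact .refl
      | @tail b' b hab' hstep ih =>
        rcases hstep with h | h <;> subst h
        · exact ih.tail (Or.inl rfl)
        · by_cases h1 : b' = X.root
          · rw [h1, X.root_fix]
          · exact ih.tail (Or.inr (by simp [graftTau, if_neg h1]))
    -- from anywhere to `Sum.inl u`, then E-connectivity finishes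
    have finishE : ∀ a : E.H, ∃ h', Relation.ReflTransGen
        (GStep (graftSig E u X) (graftTau E u X)) (Sum.inl a) h' ∧
        graftTau E u X h' = h' := by
      intro a
      obtain ⟨h', hh', hfix⟩ := E.conn a
      exact ⟨Sum.inl h', liftE hh', by simp [graftTau, hfix]⟩
    rintro (a | x | b)
    · exact finishE a
    · -- reach the root backwards, then go to `u`
      have h1 : Relation.ReflTransGen (GStep (graftSig E u X) (graftTau E u X))
          (Sum.inr (Sum.inl x)) (Sum.inr (Sum.inl X.root)) := reach_symm liftX
      have s2 : GStep (graftSig E u X) (graftTau E u X) (Sum.inr (Sum.inl X.root))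
          (Sum.inr (Sum.inr false)) := Or.inr (by simp [graftTau])
      have s3 : GStep (graftSig E u X) (graftTau E u X) (Sum.inr (Sum.inr false))
          (Sum.inl u) := Or.inl rfl
      obtain ⟨h', hh', hfix⟩ := finishE u
      exact ⟨h', ((h1.tail s2).tail s3).trans hh', hfix⟩
    · cases b
      · obtain ⟨h', hh', hfix⟩ := finishE u
        have s3 : GStep (graftSig E u X) (graftTau E u X) (Sum.inr (Sum.inr false))
            (Sum.inl u) := Or.inl rfl
        exact ⟨h', (Relation.ReflTransGen.single s3).trans hh', hfix⟩
      · obtain ⟨h', hh', hfix⟩ := finishE u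
        have s1 : GStep (graftSig E u X) (graftTau E u X) (Sum.inr (Sum.inr true))
            (Sum.inr (Sum.inl X.root)) := Or.inr rfl
        have s2 : GStep (graftSig E u X) (graftTau E u X) (Sum.inr (Sum.inl X.root))
            (Sum.inr (Sum.inr false)) := Or.inr (by simp [graftTau])
        have s3 : GStep (graftSig E u X) (graftTau E u X) (Sum.inr (Sum.inr false))
            (Sum.inl u) := Or.inl rfl
        exact ⟨h', (((Relation.ReflTransGen.single s1).tail s2).tail s3).trans hh', hfix⟩

theorem isGraft_graftD : IsGraft E u X (GraftD E u X) :=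
  ⟨Equiv.refl _, fun _ => rfl, fun _ => rfl, fun _ _ => rfl⟩

theorem graftD_reach_eq : (GraftD E u X).Reach =
    Relation.ReflTransGen (GStep (graftSig E u X) (graftTau E u X)) := rfl

end GraftD
section GraftHelpers

variable {k : ℕ} (E : Diagram k) (u : E.H) (X : GraftTree k)

theorem graftSig_inl_of_ne {h : E.H} (h1 : h ≠ u) (h2 : h ≠ E.sig u) :
    graftSig E u X (.inl h) = .inl (E.sig h) := by
  simp only [graftSig]
  rw [if_neg h1, if_neg h2]

theorem graftSig_inl_u : graftSig E u X (.inl u) = .inr (.inr false) := by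
  simp [graftSig]

theorem graftSig_inl_su (hne : E.sig u ≠ u) :
    graftSig E u X (.inl (E.sig u)) = .inr (.inr true) := by
  simp [graftSig, hne]

theorem graftTau_inr_of_ne {x : X.H} (hx : x ≠ X.root) :
    graftTau E u X (.inr (.inl x)) = .inr (.inl (X.tau x)) := by
  simp [graftTau, hx]

theorem graftTau_inr_root : graftTau E u X (.inr (.inl X.root)) = .inr (.inr false) := by
  simp [graftTau]

end GraftHelpers

namespace Setup

variable {k : ℕ} (S : Setup k)

theorem E_sig_eq : S.E.sig = S.Esig := rfl
theorem E_tau_eq : S.E.tau = S.Etau := rfl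
theorem X_root_eq : S.X.root = S.Xroot := rfl
theorem X_tau_eq : S.X.tau = S.Xtau := rfl

def graftToD : S.E.H ⊕ (S.X.H ⊕ Bool) → S.D.H
  | .inl (.inl a) => a.1
  | .inl (.inr false) => S.p
  | .inl (.inr true) => S.q
  | .inr (.inl x) => x.1
  | .inr (.inr false) => S.p'
  | .inr (.inr true) => S.q'

open Classical in
noncomputable def dToGraft (h : S.D.H) : S.E.H ⊕ (S.X.H ⊕ Bool) :=
  if hp : h = S.p then .inl (.inr false)
  else if hq : h = S.q then .inl (.inr true)
  else if hp' : h = S.p' then .inr (.inr false)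
  else if hq' : h = S.q' then .inr (.inr true)
  else if hr : S.D.Reach S.h0 h then .inr (.inl ⟨h, hr, hp, hq, hp', hq'⟩)
  else .inl (.inl ⟨h, hr⟩)

noncomputable def eED : (S.E.H ⊕ (S.X.H ⊕ Bool)) ≃ S.D.H where
  toFun := S.graftToD
  invFun := S.dToGraft
  left_inv := by
    rintro ((⟨a, ha⟩ | b) | x | b)
    · show S.dToGraft a = _
      unfold dToGraft
      rw [dif_neg (fun he => ha (by rw [he]; exact S.p_mem)),
        dif_neg (fun he => ha (by rw [he]; exact S.q_mem)),
        dif_neg (fun he => ha (by rw [he]; exact S.p'_mem)),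
        dif_neg (fun he => ha (by rw [he]; exact S.q'_mem)), dif_neg ha]
    · cases b
      · show S.dToGraft S.p = _
        unfold dToGraft
        rw [dif_pos rfl]
      · show S.dToGraft S.q = _
        unfold dToGraft
        rw [dif_neg (fun he => S.p_ne_q he.symm), dif_pos rfl]
    · show S.dToGraft x.1 = _
      unfold dToGraft
      rw [dif_neg x.2.2.1, dif_neg x.2.2.2.1, dif_neg x.2.2.2.2.1,
        dif_neg x.2.2.2.2.2, dif_pos x.2.1]
      exact congrArg Sum.inr (congrArg Sum.inl (Subtype.ext rfl))
    · cases b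
      · show S.dToGraft S.p' = _
        unfold dToGraft
        rw [dif_neg (fun he => S.p_ne_p' he.symm), dif_neg (fun he => S.q_ne_p' he.symm),
          dif_pos rfl]
      · show S.dToGraft S.q' = _
        unfold dToGraft
        rw [dif_neg (fun he => S.p_ne_q' he.symm), dif_neg (fun he => S.q_ne_q' he.symm),
          dif_neg S.p'_ne_q'.symm, dif_pos rfl]
  right_inv := by
    intro h
    unfold dToGraft
    split_ifs with h1 h2 h3 h4 h5
    · exact h1.symm
    · exact h2.symm
    · exact h3.symm
    · exact h4.symm
    · rfl
    · rfl

theorem isGraft_main : IsGraft S.E S.u S.X S.D := by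
  refine ⟨S.eED, ?_, ?_, ?_⟩
  · rintro ((⟨a, ha⟩ | b) | x | b)
    · rw [graftSig_inl_of_ne S.E S.u S.X (fun he => Sum.inl_ne_inr he)
        (fun he => Sum.inl_ne_inr he)] <;> rfl
    · cases b
      · rw [show (Sum.inl (Sum.inr false) : S.E.H ⊕ (S.X.H ⊕ Bool)) = .inl S.u from rfl,
          graftSig_inl_u]
        exact S.sig_p.symm
      · rw [show (Sum.inl (Sum.inr true) : S.E.H ⊕ (S.X.H ⊕ Bool)) = .inl (S.E.sig S.u)
            from rfl,
          graftSig_inl_su S.E S.u S.X (fun he => Bool.noConfusion (Sum.inr.inj he))]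
        exact S.sig_q.symm
    · rfl
    · cases b <;> rfl
  · rintro ((⟨a, ha⟩ | b) | x | b)
    · rfl
    · cases b
      · exact S.tau_p.symm
      · exact S.tau_q.symm
    · by_cases hx : x = S.X.root
      · subst hx
        rw [graftTau_inr_root]
        exact S.tau_t.symm
      · rw [graftTau_inr_of_ne S.E S.u S.X hx]
        have hxt : x.1 ≠ S.t := fun he => hx (Subtype.ext he)
        show (S.Xtau x).1 = S.D.tau (S.graftToD (.inr (.inl x)))
        rw [S.Xtau_of_ne hxt]
        rfl
    · cases b
      · rfl
      · rfl
  · rintro ((⟨a, ha⟩ | b) | x | b) hfix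
    · rfl
    · cases b <;> rfl
    · rfl
    · cases b
      · exact absurd hfix (by simp [graftTau])
      · exact absurd hfix (by simp [graftTau])

end Setup
section GraftReach

variable {k : ℕ} (E : Diagram k) (u : E.H) (X : GraftTree k)

theorem graftD_reach_inl {a b : E.H} (hab : E.Reach a b) :
    (GraftD E u X).Reach (.inl a) (.inl b) := by
  rw [graftD_reach_eq]
  induction hab with
  | refl => exact .refl
  | @tail b' b hab' hstep ih =>
    rcases hstep with h | h <;> subst h
    · by_cases h1 : b' = u
      · rw [h1] at ih ⊢
        have s1 : GStep (graftSig E u X) (graftTau E u X) (Sum.inl u)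
            (Sum.inr (Sum.inr false)) := Or.inl (by simp [graftSig])
        have s2 : GStep (graftSig E u X) (graftTau E u X) (Sum.inr (Sum.inr false))
            (Sum.inr (Sum.inr true)) := Or.inr rfl
        have s3 : GStep (graftSig E u X) (graftTau E u X) (Sum.inr (Sum.inr true))
            (Sum.inl (E.sig u)) := Or.inl rfl
        exact ((ih.tail s1).tail s2).tail s3
      · by_cases h2 : b' = E.sig u
        · rw [h2] at ih ⊢
          rw [E.sig_invol]
          have s1 : GStep (graftSig E u X) (graftTau E u X) (Sum.inl (E.sig u))
              (Sum.inr (Sum.inr true)) := Or.inl (by simp [graftSig, E.sig_ne u])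
          have s2 : GStep (graftSig E u X) (graftTau E u X) (Sum.inr (Sum.inr true))
              (Sum.inr (Sum.inl X.root)) := Or.inr rfl
          have s3 : GStep (graftSig E u X) (graftTau E u X) (Sum.inr (Sum.inl X.root))
              (Sum.inr (Sum.inr false)) := Or.inr (by simp [graftTau])
          have s4 : GStep (graftSig E u X) (graftTau E u X) (Sum.inr (Sum.inr false))
              (Sum.inl u) := Or.inl rfl
          exact (((ih.tail s1).tail s2).tail s3).tail s4
        · exact ih.tail (Or.inl (by simp [graftSig, if_neg h1, if_neg h2]))
    · exact ih.tail (Or.inr rfl)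

theorem graftD_reach_root (x : X.H) :
    (GraftD E u X).Reach (.inr (.inl X.root)) (.inr (.inl x)) := by
  rw [graftD_reach_eq]
  have hx := X.conn x
  induction hx with
  | refl => exact .refl
  | @tail b' b hab' hstep ih =>
    rcases hstep with h | h <;> subst h
    · exact ih.tail (Or.inl rfl)
    · by_cases h1 : b' = X.root
      · rw [h1, X.root_fix]
      · exact ih.tail (Or.inr (by simp [graftTau, if_neg h1]))

end GraftReach

namespace Setup

variable {k : ℕ} (S : Setup k)

/-- Any other component containing a `c`-colored leg either has a leg of a color other
than `c`, `d`, or is a strut with colors `c`, `d`. -/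
theorem dichotomy (hnb : ¬ S.D.HasBoring) {h₁ : S.D.H} (hfix : S.D.tau h₁ = h₁)
    (hcolc : S.D.color h₁ = S.c) :
    (∃ z', S.D.Reach h₁ z' ∧ S.D.tau z' = z' ∧ S.D.color z' ≠ S.c ∧ S.D.color z' ≠ S.d)
    ∨ (S.D.tau (S.D.sig h₁) = S.D.sig h₁ ∧ S.D.color (S.D.sig h₁) = S.d) := by
  classical
  by_cases hex : ∃ z', S.D.Reach h₁ z' ∧ S.D.tau z' = z' ∧ S.D.color z' ≠ S.c ∧
      S.D.color z' ≠ S.d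
  · exact Or.inl hex
  right
  push_neg at hex
  have hnbor : ¬ S.D.IsBoringAt h₁ := fun hb => hnb ⟨h₁, hb⟩
  unfold Diagram.IsBoringAt at hnbor
  push_neg at hnbor
  obtain ⟨hnodup, htr⟩ := hnbor
  -- all legs have pairwise distinct colors, each in {c, d}
  have hinj : Set.InjOn S.D.color (S.D.univIn h₁) := by
    intro a ha b hb hab
    by_contra hne
    exact hnodup a ha b hb hne hab
  have himg : S.D.color '' (S.D.univIn h₁) ⊆ {S.c, S.d} := by
    rintro i ⟨z, hz, rfl⟩
    rcases eq_or_ne (S.D.color z) S.c with h | h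
    · exact Or.inl h
    · exact Or.inr (hex z hz.1 hz.2 h)
  have hcard : (S.D.univIn h₁).ncard ≤ 2 := by
    rw [← Set.ncard_image_of_injOn hinj]
    calc (S.D.color '' (S.D.univIn h₁)).ncard ≤ ({S.c, S.d} : Set (Fin k)).ncard :=
          Set.ncard_le_ncard himg (Set.toFinite _)
      _ ≤ 2 := by
          apply le_trans (Set.ncard_insert_le _ _); simp [Set.ncard_singleton]
  unfold Diagram.IsTreeAt at htr
  have hcomp2 : (S.D.compSet h₁).ncard ≤ 2 := by omega
  have hwfix : S.D.tau (S.D.sig h₁) = S.D.sig h₁ := by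
    by_contra hts
    -- four distinct half-edges in the component
    set w := S.D.sig h₁ with hw
    have h4sub : ({h₁, w, S.D.tau w, S.D.tau (S.D.tau w)} : Set S.D.H) ⊆
        S.D.compSet h₁ := by
      rintro z (rfl | rfl | rfl | rfl)
      · exact Relation.ReflTransGen.refl
      · exact S.D.reach_sig h₁
      · exact (S.D.reach_sig h₁).trans' (S.D.reach_tau _)
      · exact ((S.D.reach_sig h₁).trans' (S.D.reach_tau _)).trans' (S.D.reach_tau _)
    have hne1 : h₁ ≠ w := fun he => S.D.sig_ne h₁ he.symm
    have hne2 : h₁ ≠ S.D.tau w := by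
      intro he
      have h2 : S.D.tau (S.D.tau w) = S.D.tau w := by
        rw [← he]; rw [hfix, he]
      exact hts (by calc S.D.tau w = S.D.tau (S.D.tau (S.D.tau w)) := by rw [h2, h2]
        _ = w := S.D.tau_cube w)
    have hne3 : h₁ ≠ S.D.tau (S.D.tau w) := by
      intro he
      apply hne1
      calc h₁ = S.D.tau h₁ := hfix.symm
        _ = S.D.tau (S.D.tau (S.D.tau w)) := by rw [← he]
        _ = w := S.D.tau_cube w
    have hne4 : w ≠ S.D.tau w := fun he => hts he.symm
    have hne5 : w ≠ S.D.tau (S.D.tau w) := fun he => (S.D.tau_sq_ne_of_ne hts) he.symm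
    have hne6 : S.D.tau w ≠ S.D.tau (S.D.tau w) := fun he => (S.D.tau_ne_of_ne hts) he.symm
    have h4card : ({h₁, w, S.D.tau w, S.D.tau (S.D.tau w)} : Set S.D.H).ncard = 4 := by
      rw [Set.ncard_insert_of_notMem (by simp [hne1, hne2, hne3]),
        Set.ncard_insert_of_notMem (by simp [hne4, hne5]),
        Set.ncard_insert_of_notMem (by simp [hne6]), Set.ncard_singleton]
    have := Set.ncard_le_ncard h4sub (Set.toFinite _)
    omega
  refine ⟨hwfix, ?_⟩
  have hwuniv : S.D.sig h₁ ∈ S.D.univIn h₁ := ⟨S.D.reach_sig h₁, hwfix⟩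
  rcases eq_or_ne (S.D.color (S.D.sig h₁)) S.c with h | h
  · exact absurd (hinj hwuniv ⟨Relation.ReflTransGen.refl, hfix⟩ (h.trans hcolc.symm))
      (S.D.sig_ne h₁)
  · exact hex _ (S.D.reach_sig h₁) hwfix h

end Setup
namespace Setup

variable {k : ℕ} (S : Setup k)

/-- If the component of the other `c`-leg `h₁` contains a leg of color `∉ {c, d}`, then
grafting `X` there produces a boring diagram. -/
theorem boring_graft {h₁ : S.D.H} (hnc : ¬ S.D.Reach S.h0 h₁)
    {z' : S.D.H} (hz'r : S.D.Reach h₁ z') (hz'f : S.D.tau z' = z')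
    (hz'c : S.D.color z' ≠ S.c) (hz'd : S.D.color z' ≠ S.d) :
    (GraftD S.E (Sum.inl ⟨h₁, hnc⟩) S.X).HasBoring := by
  classical
  set u' : S.E.H := Sum.inl ⟨h₁, hnc⟩ with hu'
  set G := GraftD S.E u' S.X with hG
  -- the leg of color `e` inside `X`
  obtain ⟨z, ⟨hzu, hzc⟩, -⟩ := S.hcol (S.D.color z')
  have hzXP : S.XP z := by
    refine ⟨hzu.1, ?_, ?_, ?_, ?_⟩
    · intro he; exact hz'c (by rw [← hzc, he]; rfl)
    · intro he; exact hz'd (by rw [← hzc, he]; rfl)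
    · intro he; exact S.p'_nf (by rw [← he]; exact hzu.2)
    · intro he; exact S.q'_nf (by rw [← he]; exact hzu.2)
  have hnz' : ¬ S.D.Reach S.h0 z' := fun hr => hnc (hr.trans' hz'r.symm)
  set x0 : G.H := Sum.inl (Sum.inl ⟨z', hnz'⟩) with hx0
  set y0 : G.H := Sum.inr (Sum.inl ⟨z, hzXP⟩) with hy0
  refine ⟨x0, Or.inl ⟨x0, ⟨Relation.ReflTransGen.refl, ?_⟩, y0, ⟨?_, ?_⟩, ?_, ?_⟩⟩
  · -- x0 fixed
    exact congrArg Sum.inl (congrArg Sum.inl (Subtype.ext hz'f))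
  · -- reach x0 y0
    have r1 : G.Reach x0 (Sum.inl u') := by
      refine graftD_reach_inl S.E u' S.X ?_
      rw [E_reach_eq]
      exact S.liftE hz'r.symm hnz' hnc
    have s2 : GStep G.sig G.tau (Sum.inl u') (Sum.inr (Sum.inr false)) :=
      Or.inl (graftSig_inl_u S.E u' S.X).symm
    have s3 : GStep G.sig G.tau (Sum.inr (Sum.inr false)) (Sum.inr (Sum.inr true)) :=
      Or.inr rfl
    have s4 : GStep G.sig G.tau (Sum.inr (Sum.inr true)) (Sum.inr (Sum.inl S.X.root)) :=
      Or.inr rfl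
    have r5 : G.Reach (Sum.inr (Sum.inl S.X.root)) y0 := graftD_reach_root S.E u' S.X _
    exact (((r1.tail s2).tail s3).tail s4).trans r5
  · -- y0 fixed
    have hzt : z ≠ S.t := fun he => S.t_nf (by rw [← he]; exact hzu.2)
    have : (⟨z, hzXP⟩ : S.X.H) ≠ S.X.root := fun he => hzt (congrArg Subtype.val he)
    show graftTau S.E u' S.X y0 = y0
    rw [hy0, graftTau_inr_of_ne S.E u' S.X this, X_tau_eq]
    exact congrArg Sum.inr (congrArg Sum.inl
      ((S.Xtau_of_ne (a := ⟨z, hzXP⟩) hzt).trans (Subtype.ext hzu.2)))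
  · -- distinct
    intro he
    exact Sum.inl_ne_inr he
  · -- same color
    show S.D.color z' = S.D.color z
    rw [hzc]

end Setup
namespace Setup

variable {k : ℕ} (S : Setup k)

/-- If the component of `h₁` is a strut with colors `c, d`, then grafting `X` at `h₁`
gives a diagram isomorphic to `D`. -/
theorem iso_strut {h₁ : S.D.H} (hnc : ¬ S.D.Reach S.h0 h₁)
    (hfix : S.D.tau h₁ = h₁) (hcolc : S.D.color h₁ = S.c)
    (hwfix : S.D.tau (S.D.sig h₁) = S.D.sig h₁)
    (hwcol : S.D.color (S.D.sig h₁) = S.d) :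
    Diagram.Iso (GraftD S.E (Sum.inl ⟨h₁, hnc⟩) S.X) S.D := by
  classical
  set u' : S.E.H := Sum.inl ⟨h₁, hnc⟩ with hu'
  have hnw : ¬ S.D.Reach S.h0 (S.D.sig h₁) := fun hr => hnc (by
    have h2 := hr.trans' (S.D.reach_sig _)
    rwa [S.D.sig_invol] at h2)
  set w' : S.E.H := Sum.inl ⟨S.D.sig h₁, hnw⟩ with hw'
  have hEsu' : S.E.sig u' = w' := rfl
  have hEsw' : S.E.sig w' = u' := by
    rw [hw', hu']
    exact congrArg Sum.inl (Subtype.ext (S.D.sig_invol h₁))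
  have hEsu : S.E.sig S.u = S.w := rfl
  have hEsw : S.E.sig S.w = S.u := rfl
  have hu'w : u' ≠ S.w := fun he => Sum.inl_ne_inr he
  have hu'u : u' ≠ S.u := fun he => Sum.inl_ne_inr he
  have hw'u : w' ≠ S.u := fun he => Sum.inl_ne_inr he
  have hw'w : w' ≠ S.w := fun he => Sum.inl_ne_inr he
  have hu'w' : u' ≠ w' := fun he =>
    S.D.sig_ne h₁ (congrArg Subtype.val (Sum.inl.inj he)).symm
  have huw : S.u ≠ S.w := fun he => Bool.noConfusion (Sum.inr.inj he)
  -- the swap of the two struts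
  set f : S.E.H → S.E.H := fun a =>
    if a = u' then S.u else if a = S.u then u' else if a = w' then S.w
    else if a = S.w then w' else a with hf
  have hfu' : f u' = S.u := by rw [hf]; simp
  have hfu : f S.u = u' := by rw [hf]; simp [hu'u.symm]
  have hfw' : f w' = S.w := by rw [hf]; simp [hu'w'.symm, hw'u]
  have hfw : f S.w = w' := by rw [hf]; simp [hu'w.symm, huw.symm, hw'w.symm]
  have hfother : ∀ a, a ≠ u' → a ≠ S.u → a ≠ w' → a ≠ S.w → f a = a := by
    intro a n1 n2 n3 n4; rw [hf]; simp [n1, n2, n3, n4]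
  have hff : ∀ a, f (f a) = a := by
    intro a
    by_cases n1 : a = u'
    · rw [n1, hfu', hfu]
    by_cases n2 : a = S.u
    · rw [n2, hfu, hfu']
    by_cases n3 : a = w'
    · rw [n3, hfw', hfw]
    by_cases n4 : a = S.w
    · rw [n4, hfw, hfw']
    rw [hfother a n1 n2 n3 n4, hfother a n1 n2 n3 n4]
  -- commutes with E.tau (all four swapped points are fixed)
  have hEtu' : S.E.tau u' = u' := congrArg Sum.inl (Subtype.ext hfix)
  have hEtw' : S.E.tau w' = w' := congrArg Sum.inl (Subtype.ext hwfix)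
  have hkey : ∀ a b, S.E.tau b = b → S.E.tau a = b → a = b := by
    intro a b hb he
    calc a = S.E.tau (S.E.tau (S.E.tau a)) := (S.E.tau_cube a).symm
      _ = b := by rw [he, hb, hb]
  have htau_comm : ∀ a, f (S.E.tau a) = S.E.tau (f a) := by
    intro a
    by_cases n1 : a = u'
    · rw [n1, hEtu', hfu']; rfl
    by_cases n2 : a = S.u
    · rw [n2, hfu]; rw [show S.E.tau S.u = S.u from rfl, hfu, hEtu']
    by_cases n3 : a = w'
    · rw [n3, hEtw', hfw']; rfl
    by_cases n4 : a = S.w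
    · rw [n4, hfw]; rw [show S.E.tau S.w = S.w from rfl, hfw, hEtw']
    rw [hfother a n1 n2 n3 n4,
      hfother (S.E.tau a) (fun he => n1 (hkey a u' hEtu' he))
        (fun he => n2 (hkey a S.u rfl he)) (fun he => n3 (hkey a w' hEtw' he))
        (fun he => n4 (hkey a S.w rfl he))]
  -- commutation with the graft structure maps
  have hsig_comm : ∀ pp, (Sum.map f id) (graftSig S.E u' S.X pp) =
      graftSig S.E S.u S.X ((Sum.map f id) pp) := by
    rintro (a | x | b)
    · simp only [Sum.map_inl]
      by_cases n1 : a = u'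
      · rw [n1, graftSig_inl_u, hfu', graftSig_inl_u]; rfl
      by_cases n3 : a = w'
      · rw [n3, ← hEsu', graftSig_inl_su S.E u' S.X (by rw [hEsu']; exact hu'w'.symm),
          hEsu', hfw', ← hEsu, graftSig_inl_su S.E S.u S.X (by rw [hEsu]; exact huw.symm)]
        rfl
      by_cases n2 : a = S.u
      · rw [n2, graftSig_inl_of_ne S.E u' S.X hu'u.symm
            (by rw [hEsu']; exact hw'u.symm), hEsu, hfu,
          graftSig_inl_of_ne S.E S.u S.X hu'u (by rw [hEsu]; exact hu'w), hEsu']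
        simp only [Sum.map_inl]
        rw [hfw]
      by_cases n4 : a = S.w
      · rw [n4, graftSig_inl_of_ne S.E u' S.X hu'w.symm
            (by rw [hEsu']; exact hw'w.symm), hEsw, hfw,
          graftSig_inl_of_ne S.E S.u S.X hw'u (by rw [hEsu]; exact hw'w), hEsw']
        simp only [Sum.map_inl]
        rw [hfu]
      · have hsig4 : S.E.sig a ≠ u' ∧ S.E.sig a ≠ S.u ∧ S.E.sig a ≠ w' ∧
            S.E.sig a ≠ S.w := by
          refine ⟨fun he => n3 ?_, fun he => n4 ?_, fun he => n1 ?_, fun he => n2 ?_⟩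
          · rw [← S.E.sig_invol a, he, hEsu']
          · rw [← S.E.sig_invol a, he, hEsu]
          · rw [← S.E.sig_invol a, he, hEsw']
          · rw [← S.E.sig_invol a, he, hEsw]
        rw [graftSig_inl_of_ne S.E u' S.X n1 (by rw [hEsu']; exact n3),
          hfother a n1 n2 n3 n4,
          graftSig_inl_of_ne S.E S.u S.X n2 (by rw [hEsu]; exact n4)]
        simp only [Sum.map_inl]
        rw [hfother _ hsig4.1 hsig4.2.1 hsig4.2.2.1 hsig4.2.2.2]
    · rfl
    · cases b
      · show Sum.map f id (Sum.inl u') = Sum.inl S.u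
        simp only [Sum.map_inl]; rw [hfu']
      · show Sum.map f id (Sum.inl (S.E.sig u')) = Sum.inl (S.E.sig S.u)
        rw [hEsu', hEsu]
        simp only [Sum.map_inl]; rw [hfw']
  have htau_commG : ∀ pp, (Sum.map f id) (graftTau S.E u' S.X pp) =
      graftTau S.E S.u S.X ((Sum.map f id) pp) := by
    rintro (a | x | b)
    · show Sum.map f id (Sum.inl (S.E.tau a)) = graftTau S.E S.u S.X (Sum.inl (f a))
      simp only [Sum.map_inl]
      rw [htau_comm]
      rfl
    · by_cases hx : x = S.X.root
      · simp only [Sum.map_inr, id_eq]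
        rw [hx, graftTau_inr_root S.E u' S.X, graftTau_inr_root S.E S.u S.X]
        simp
      · rw [graftTau_inr_of_ne S.E u' S.X hx]
        simp only [Sum.map_inr, id_eq]
        rw [graftTau_inr_of_ne S.E S.u S.X hx]
    · cases b <;> rfl
  have hcol_comm : ∀ pp, graftColor S.E S.u S.X ((Sum.map f id) pp) =
      graftColor S.E u' S.X pp := by
    have hcolf : ∀ a, S.E.color (f a) = S.E.color a := by
      intro a
      by_cases n1 : a = u'
      · rw [n1, hfu']
        show S.c = S.E.color u'
        exact hcolc.symm
      by_cases n2 : a = S.u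
      · rw [n2, hfu]
        show S.E.color u' = S.c
        exact hcolc
      by_cases n3 : a = w'
      · rw [n3, hfw']
        show S.d = S.E.color w'
        exact hwcol.symm
      by_cases n4 : a = S.w
      · rw [n4, hfw]
        show S.E.color w' = S.d
        exact hwcol
      · rw [hfother a n1 n2 n3 n4]
    rintro (a | x | b)
    · exact hcolf a
    · rfl
    · cases b
      · show S.E.color S.u = S.E.color u'
        exact hcolc.symm
      · show S.E.color S.u = S.E.color u'
        exact hcolc.symm
  -- assemble the isomorphism
  obtain ⟨e0, he0s, he0t, he0c⟩ := S.isGraft_main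
  refine ⟨(Equiv.sumCongr (Equiv.mk f f hff hff) (Equiv.refl _)).trans e0, ?_, ?_, ?_⟩
  · intro h
    show e0 (Sum.map f id (graftSig S.E u' S.X h)) = S.D.sig (e0 (Sum.map f id h))
    rw [hsig_comm h]
    exact he0s _
  · intro h
    show e0 (Sum.map f id (graftTau S.E u' S.X h)) = S.D.tau (e0 (Sum.map f id h))
    rw [htau_commG h]
    exact he0t _
  · intro h hfix'
    show S.D.color (e0 (Sum.map f id h)) = graftColor S.E u' S.X h
    have hfix'' : graftTau S.E u' S.X h = h := hfix'
    have hfix2 : graftTau S.E S.u S.X (Sum.map f id h) = Sum.map f id h := by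
      rw [← htau_commG h, hfix'']
    rw [he0c _ hfix2, hcol_comm h]

end Setup
/-- If `k ≥ 3` and the unitrivalent diagram `D` on `k` colors has a
connected component (the one containing the half-edge `h0`) which is a tree with exactly
one univalent vertex of each of the `k` colors (hence of degree `k - 1`), then the class
of `D` in `B^{hl}(k)` is zero. -/
theorem finite_type_link_homotopy_stmt0 (k : ℕ) (hk : 3 ≤ k) (D : Diagram k) (h0 : D.H)
    (htree : D.IsTreeAt h0)
    (hcol : ∀ i : Fin k, ∃! x : D.H, x ∈ D.univIn h0 ∧ D.color x = i) :
    bhlClass D = 0 := by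
  by_cases hB : D.HasBoring
  · refine (Submodule.Quotient.mk_eq_zero _).mpr ?_
    exact Submodule.subset_span (Or.inl (Or.inr ⟨D, hB, rfl⟩))
  -- choose a cherry and set up all data
  obtain ⟨x, hxr, hxnf, hpf, hqf⟩ := D.exists_cherry h0 hk htree hcol
  set S : Setup k := ⟨D, h0, hk, htree, hcol, x, hxr, hxnf, hpf, hqf⟩ with hS
  set g : S.E.H → Diagram k :=
    fun u' => if u' = S.u then D else GraftD S.E u' S.X with hg
  have hgspec : ∀ u', S.E.tau u' = u' → S.E.color u' = S.c →
      IsGraft S.E u' S.X (g u') := by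
    intro u' _ _
    by_cases hu : u' = S.u
    · rw [hg]
      simp only [if_pos hu, hu]
      exact S.isGraft_main
    · rw [hg]
      simp only [if_neg hu]
      exact isGraft_graftD S.E u' S.X
  set A : Finset S.E.H :=
    Finset.univ.filter (fun u' => S.E.tau u' = u' ∧ S.E.color u' = S.c) with hA
  have hlink : (∑ u' ∈ A, fd (g u')) ∈ LinkRel k := ⟨S.E, S.c, S.X, g, hgspec, rfl⟩
  -- push to the quotient
  set π := (BhlRel k).mkQ with hπ
  have hsum0 : ∑ u' ∈ A, π (fd (g u')) = 0 := by
    rw [← map_sum]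
    refine (Submodule.Quotient.mk_eq_zero _).mpr ?_
    exact Submodule.subset_span (Or.inr hlink)
  -- each term is either `π (fd D)` or `0`
  have hval : ∀ u' ∈ A, π (fd (g u')) = π (fd D) ∨ π (fd (g u')) = 0 := by
    intro u' hu'A
    rw [hA, Finset.mem_filter] at hu'A
    obtain ⟨-, hfix, hcolc⟩ := hu'A
    by_cases hu : u' = S.u
    · left
      rw [hg]
      simp only [if_pos hu]
    · rw [hg]
      simp only [if_neg hu]
      rcases u' with (⟨h₁, hnc⟩ | b)
      · have hfix' : S.D.tau h₁ = h₁ := congrArg Subtype.val (Sum.inl.inj hfix)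
        have hcolc' : S.D.color h₁ = S.c := hcolc
        rcases S.dichotomy hB hfix' hcolc' with ⟨z', h1, h2, h3, h4⟩ | ⟨hwfix, hwcol⟩
        · right
          refine (Submodule.Quotient.mk_eq_zero _).mpr ?_
          exact Submodule.subset_span (Or.inl (Or.inr
            ⟨GraftD S.E (Sum.inl ⟨h₁, hnc⟩) S.X, S.boring_graft hnc h1 h2 h3 h4, rfl⟩))
        · left
          have hiso := S.iso_strut hnc hfix' hcolc' hwfix hwcol
          have hmem : fd (GraftD S.E (Sum.inl ⟨h₁, hnc⟩) S.X) - fd S.D ∈ BhlRel k :=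
            Submodule.subset_span (Or.inl (Or.inl (Or.inl (Or.inl
              ⟨GraftD S.E (Sum.inl ⟨h₁, hnc⟩) S.X, S.D, hiso, rfl⟩))))
          have h2 := (Submodule.Quotient.mk_eq_zero _).mpr hmem
          rw [← Submodule.mkQ_apply, map_sub, sub_eq_zero] at h2
          exact h2
      · cases b
        · exact absurd rfl hu
        · exact absurd hcolc.symm S.c_ne_d
  -- conclude by counting
  classical
  have hsplit := Finset.sum_filter_add_sum_filter_not A
    (fun u' => π (fd (g u')) = π (fd D)) (fun u' => π (fd (g u')))
  have hB0 : ∑ u' ∈ A.filter (fun u' => ¬ π (fd (g u')) = π (fd D)),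
      π (fd (g u')) = 0 := by
    refine Finset.sum_eq_zero ?_
    intro u' hu'
    rw [Finset.mem_filter] at hu'
    rcases hval u' hu'.1 with h | h
    · exact absurd h hu'.2
    · exact h
  have hBsum : ∑ u' ∈ A.filter (fun u' => π (fd (g u')) = π (fd D)), π (fd (g u')) =
      (A.filter (fun u' => π (fd (g u')) = π (fd D))).card • π (fd D) := by
    rw [Finset.sum_congr rfl (fun u' hu' => (Finset.mem_filter.mp hu').2)]
    exact Finset.sum_const _
  have huB : S.u ∈ A.filter (fun u' => π (fd (g u')) = π (fd D)) := by
    rw [Finset.mem_filter]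
    refine ⟨?_, ?_⟩
    · rw [hA, Finset.mem_filter]
      exact ⟨Finset.mem_univ _, rfl, rfl⟩
    · rw [hg]
      simp
  have hcard : (A.filter (fun u' => π (fd (g u')) = π (fd D))).card ≠ 0 :=
    Finset.card_ne_zero_of_mem huB
  have hBzero : (A.filter (fun u' => π (fd (g u')) = π (fd D))).card • π (fd D) = 0 := by
    rw [← hBsum]
    rw [hB0, add_zero, hsum0] at hsplit
    exact hsplit
  have hre : ((A.filter (fun u' => π (fd (g u')) = π (fd D))).card : ℝ) • π (fd D) = 0 := by
    rw [Nat.cast_smul_eq_nsmul]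
    exact hBzero
  rcases smul_eq_zero.mp hre with h | h
  · exact absurd (Nat.cast_eq_zero.mp h) hcard
  · exact h
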